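/- arXiv:1606.03955 — 4 statements merged into one kernel-verified Lean document; each statement's English description precedes it below -/
import Mathlib

section
/- Let g_x be the morphism from {0,1,2}* to {0,1}* defined by g_x(0)=01110, g_x(1)=0110, g_x(2)=0. Then for every letters p,s in {0,1,2} and every word Y over {0,1,2} with |Y| ≥ 4, the word g_x(p·2·Y·Y·s) contains an occurrence of the formula AABA.AABBA, i.e., there exist non-empty binary words A and B such that both AABA and AABBA are factors of g_x(p2YYs). -/
def g2w (g : Fin 3 → List Bool) (w : List (Fin 3)) : List Bool :=
  (w.map g).flatten

def gx : Fin 3 → List Bool := ![[false,true,true,true,false], [false,true,true,false], [false]]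

theorem stmt5 (p s : Fin 3) (Y : List (Fin 3)) (hY : 4 ≤ Y.length) :
    ∃ A B : List Bool, A ≠ [] ∧ B ≠ [] ∧
      (A ++ A ++ B ++ A) <:+: g2w gx ([p, 2] ++ Y ++ Y ++ [s]) ∧
      (A ++ A ++ B ++ B ++ A) <:+: g2w gx ([p, 2] ++ Y ++ Y ++ [s]) := by
  have hYne : Y ≠ [] := by intro h; simp [h] at hY
  obtain ⟨y, Y', rfl⟩ := List.exists_cons_of_ne_nil hYne
  set gY := g2w gx (y :: Y') with hgY
  obtain ⟨T, hT⟩ : ∃ T, gY = false :: T := by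
    refine ⟨(gx y).tail ++ g2w gx Y', ?_⟩
    rw [hgY]
    fin_cases y <;> simp [g2w, gx]
  have hW : g2w gx ([p, 2] ++ (y :: Y') ++ (y :: Y') ++ [s])
      = gx p ++ [false] ++ gY ++ gY ++ gx s := by
    simp [hgY, g2w, gx]
  have h2 : ([false] ++ [false] ++ gY ++ gY ++ [false])
      <:+: g2w gx ([p, 2] ++ (y :: Y') ++ (y :: Y') ++ [s]) := by
    rw [hW]
    refine ⟨(gx p).dropLast, (gx s).tail, ?_⟩
    fin_cases p <;> fin_cases s <;> simp [gx]
  refine ⟨[false], gY, by simp, by rw [hT]; simp, ?_, ?_⟩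
  · have h1 : ([false] ++ [false] ++ gY ++ [false])
        <+: ([false] ++ [false] ++ gY ++ gY ++ [false]) := by
      refine ⟨T ++ [false], ?_⟩
      rw [hT]; simp
    exact h1.isInfix.trans h2
  · exact h2
end

section
/- Let b_3 be the fixed point of the morphism 0↦012, 1↦02, 2↦1. Suppose w is a bi-infinite ternary word avoiding the factors 00, 11, 22, 010, 212, 0202, 2020, 1021, 1201, and avoiding every factor of the form 2YY with |Y| ≥ 4. If w contains a square MM with M beginning with the letter 1 and |M| ≥ 4, then w contains a square M'M' with M' beginning with the letter 0 and |M'| ≥ 4. -/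
def FacZ {α : Type*} (w : ℤ → α) (u : List α) : Prop :=
  ∃ i : ℤ, u = (List.range u.length).map (fun k => w (i + k))

lemma facZ_iff {α : Type*} (w : ℤ → α) (u : List α) :
    FacZ w u ↔ ∃ i : ℤ, ∀ k, (hk : k < u.length) → u[k] = w (i + k) := by
  constructor
  · rintro ⟨i, hi⟩
    simp only [bind_pure_comp, List.map_eq_map, List.map_map, Function.comp_def] at hi
    refine ⟨i, fun k hk => ?_⟩
    rw [List.getElem_of_eq hi hk, List.getElem_map]
    congr 1
    rw [List.getElem_range]
  · rintro ⟨i, hi⟩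
    refine ⟨i, ?_⟩
    simp only [bind_pure_comp, List.map_eq_map, List.map_map, Function.comp_def]
    apply List.ext_getElem (by rw [List.length_map, List.length_range])
    intro k hk1 hk2
    simp only [List.getElem_map]
    rw [List.getElem_range]
    exact hi k hk1

lemma facZ_cons {α : Type*} {w : ℤ → α} {a : α} {u : List α} {i : ℤ}
    (ha : w (i - 1) = a) (hu : ∀ k, (hk : k < u.length) → u[k] = w (i + k)) :
    FacZ w (a :: u) := by
  rw [facZ_iff]
  refine ⟨i - 1, fun k hk => ?_⟩
  match k with
  | 0 => simpa using ha.symm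
  | (n+1) =>
    simp only [List.getElem_cons_succ]
    rw [hu n (by simpa using hk)]
    congr 1
    push_cast
    ring

lemma facZ_dropLast {α : Type*} {w : ℤ → α} {u : List α} (h : FacZ w u) :
    FacZ w u.dropLast := by
  rw [facZ_iff] at h ⊢
  obtain ⟨i, hi⟩ := h
  refine ⟨i, fun k hk => ?_⟩
  have hk' : k < u.length := by
    simp only [List.length_dropLast] at hk; omega
  rw [List.getElem_dropLast]
  exact hi k hk'

theorem stmt9 (w : ℤ → Fin 3)
    (h1 : ∀ u ∈ ([[0,0],[1,1],[2,2],[0,1,0],[2,1,2],[0,2,0,2],[2,0,2,0],[1,0,2,1],[1,2,0,1]] : List (List (Fin 3))), ¬ FacZ w u)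
    (h2 : ∀ Y : List (Fin 3), 4 ≤ Y.length → ¬ FacZ w (2 :: (Y ++ Y)))
    (h3 : ∃ M : List (Fin 3), M.head? = some 1 ∧ 4 ≤ M.length ∧ FacZ w (M ++ M)) :
    ∃ M' : List (Fin 3), M'.head? = some 0 ∧ 4 ≤ M'.length ∧ FacZ w (M' ++ M') := by
  -- forbidden short patterns, pointwise
  have no11 : ∀ j : ℤ, w j = 1 → w (j+1) = 1 → False := by
    intro j e1 e2
    exact h1 [1,1] (by simp) ⟨j, by simp [List.range_succ, e1, e2]⟩
  have no010 : ∀ j : ℤ, w j = 0 → w (j+1) = 1 → w (j+2) = 0 → False := by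
    intro j e1 e2 e3
    refine h1 [0,1,0] (by simp) ⟨j, ?_⟩
    simp [List.range_succ, e1, e2, show j + 1 + 1 = j + 2 by ring, e3]
  have no212 : ∀ j : ℤ, w j = 2 → w (j+1) = 1 → w (j+2) = 2 → False := by
    intro j e1 e2 e3
    refine h1 [2,1,2] (by simp) ⟨j, ?_⟩
    simp [List.range_succ, e1, e2, show j + 1 + 1 = j + 2 by ring, e3]
  obtain ⟨M, hhead, hm4, hfac⟩ := h3
  rw [facZ_iff] at hfac
  obtain ⟨i, hi⟩ := hfac
  have hne : M ≠ [] := by intro h; simp [h] at hm4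
  -- entries of M
  have hA : ∀ k, (hk : k < M.length) → M[k] = w (i + k) := by
    intro k hk
    have h := hi k (by simp; omega)
    rwa [List.getElem_append_left] at h
  have hB : ∀ k, (hk : k < M.length) → M[k] = w (i + M.length + k) := by
    intro k hk
    have h := hi (M.length + k) (by simp; omega)
    rw [List.getElem_append_right (by omega)] at h
    simp only [Nat.add_sub_cancel_left] at h
    rw [h]
    congr 1
    push_cast
    ring
  have hM0 : M[0]'(by omega) = 1 := by
    rw [List.getElem_zero]
    rw [List.head?_eq_head hne] at hhead
    exact Option.some.inj hhead
  have w_i : w i = 1 := by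
    have := hA 0 (by omega)
    rw [hM0] at this
    simpa using this.symm
  have w_im : w (i + M.length) = 1 := by
    have := hB 0 (by omega)
    rw [hM0] at this
    simpa using this.symm
  -- letter before the square is 0
  have w_prev : w (i - 1) = 0 := by
    have hn1 : w (i - 1) ≠ 1 := by
      intro h
      exact no11 (i-1) h (by rwa [show i - 1 + 1 = i by ring])
    have hn2 : w (i - 1) ≠ 2 := by
      intro h
      exact h2 M hm4 (facZ_cons h hi)
    have key3 : ∀ a : Fin 3, a ≠ 1 → a ≠ 2 → a = 0 := by decide
    exact key3 _ hn1 hn2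
  -- w (i+1) = 2
  have w_i1 : w (i + 1) = 2 := by
    have hn0 : w (i + 1) ≠ 0 := by
      intro h
      exact no010 (i-1) w_prev (by rwa [show i - 1 + 1 = i by ring])
        (by rwa [show i - 1 + 2 = i + 1 by ring])
    have hn1 : w (i + 1) ≠ 1 := fun h => no11 i w_i h
    have key3 : ∀ a : Fin 3, a ≠ 0 → a ≠ 1 → a = 2 := by decide
    exact key3 _ hn0 hn1
  -- last letter of M is 0
  have w_im1 : w (i + M.length + 1) = 2 := by
    have ha := hA 1 (by omega)
    have hb := hB 1 (by omega)
    rw [ha] at hb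
    have hb' : w (i + 1) = w (i + ↑M.length + 1) := by simpa using hb
    rw [← hb']
    exact w_i1
  have w_last : w (i + M.length - 1) = 0 := by
    have hn1 : w (i + M.length - 1) ≠ 1 := by
      intro h
      exact no11 (i + M.length - 1) h (by rwa [show i + ↑M.length - 1 + 1 = i + ↑M.length by ring])
    have hn2 : w (i + M.length - 1) ≠ 2 := by
      intro h
      exact no212 (i + M.length - 1) h
        (by rwa [show i + ↑M.length - 1 + 1 = i + ↑M.length by ring])
        (by rwa [show i + ↑M.length - 1 + 2 = i + ↑M.length + 1 by ring])
    have key3 : ∀ a : Fin 3, a ≠ 1 → a ≠ 2 → a = 0 := by decide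
    exact key3 _ hn1 hn2
  have hlastM : M.getLast hne = 0 := by
    rw [List.getLast_eq_getElem]
    rw [hA (M.length - 1) (by omega)]
    rw [show ((M.length - 1 : ℕ) : ℤ) = (M.length : ℤ) - 1 by omega,
      show i + ((M.length : ℤ) - 1) = i + (M.length : ℤ) - 1 by ring]
    exact w_last
  -- construct the new square
  refine ⟨0 :: M.dropLast, by simp, by simp; omega, ?_⟩
  have key : FacZ w (0 :: (M ++ M)) := facZ_cons w_prev hi
  have key2 := facZ_dropLast key
  have hMeq : M.dropLast ++ [0] = M := by
    conv_rhs => rw [← List.dropLast_append_getLast hne]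
    rw [hlastM]
  have heq : (0 :: (M ++ M)).dropLast = (0 :: M.dropLast) ++ (0 :: M.dropLast) := by
    rw [List.dropLast_cons_of_ne_nil (by simp [hne]),
      List.dropLast_append_of_ne_nil hne]
    generalize hP : M.dropLast = P
    rw [hP] at hMeq
    rw [← hMeq]
    simp
  rwa [heq] at key2
end

section
/- Let g be a synchronizing q-uniform morphism from {0,1,2}* to {0,1}* and let t satisfy 2t < q. Suppose that no image g(w) of a ternary square-free word w contains a square uu with t ≤ |u| ≤ 2q−2, and no image g(w) of a ternary square-free word w of length 3 contains a square of period exactly q. Then for every ternary square-free word w, the word g(w) contains no square uu with |u| ≥ t. -/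
def SqFree {α : Type*} (w : List α) : Prop :=
  ∀ X : List α, X ≠ [] → ¬ (X ++ X) <:+: w

lemma g2w_append (g : Fin 3 → List Bool) (v w : List (Fin 3)) :
    g2w g (v ++ w) = g2w g v ++ g2w g w := by simp [g2w]

lemma g2w_cons (g : Fin 3 → List Bool) (a : Fin 3) (w : List (Fin 3)) :
    g2w g (a :: w) = g a ++ g2w g w := by simp [g2w]

lemma length_g2w (g : Fin 3 → List Bool) (q : ℕ) (hq : ∀ a, (g a).length = q)
    (w : List (Fin 3)) : (g2w g w).length = q * w.length := by
  induction w with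
  | nil => simp [g2w]
  | cons a w ih => rw [g2w_cons, List.length_append, ih, hq, List.length_cons]; ring

lemma blockseg (g : Fin 3 → List Bool) (q : ℕ) (hq : ∀ a, (g a).length = q)
    (w : List (Fin 3)) (j : ℕ) (hj : j < w.length) :
    ((g2w g w).drop (j*q)).take q = g w[j] := by
  conv_lhs => rw [← List.take_append_drop j w, g2w_append]
  rw [List.drop_left' (by rw [length_g2w g q hq, List.length_take,
    Nat.min_eq_left hj.le, Nat.mul_comm])]
  rw [List.drop_eq_getElem_cons hj, g2w_cons, List.take_left' (hq _)]

lemma periodic_seg (s u tl : List Bool) (d l : ℕ) (h : d + l ≤ u.length) :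
    ((s ++ (u ++ u) ++ tl).drop (s.length + d)).take l
      = ((s ++ (u ++ u) ++ tl).drop (s.length + d + u.length)).take l := by
  have e : s ++ (u ++ u) ++ tl = s ++ (u ++ (u ++ tl)) := by simp
  rw [e]
  have h1 : (s ++ (u ++ (u ++ tl))).drop (s.length + d) = u.drop d ++ (u ++ tl) := by
    rw [← List.drop_drop, List.drop_left, List.drop_append_of_le_length (by omega)]
  have h2 : (s ++ (u ++ (u ++ tl))).drop (s.length + d + u.length) = u.drop d ++ tl := by
    rw [show s.length + d + u.length = s.length + (u.length + d) by omega,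
        ← List.drop_drop, ← List.drop_drop, List.drop_left, List.drop_left,
        List.drop_append_of_le_length (by omega)]
  rw [h1, h2, List.take_append_of_le_length (by simp; omega),
      List.take_append_of_le_length (by simp; omega)]

lemma not_sqfree_of_eq (w : List (Fin 3)) (k L : ℕ) (hL : 0 < L) (h2 : k + 2*L ≤ w.length)
    (heq : ∀ d, d < L → w[k+d]? = w[k+L+d]?) : ¬ SqFree w := by
  intro hw
  apply hw ((w.drop k).take L)
  · intro h
    have : ((w.drop k).take L).length = L := by simp; omega
    rw [h] at this; simp at this; omega
  have key : (w.drop (k+L)).take L = (w.drop k).take L := by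
    apply List.ext_getElem (by simp; omega)
    intro d hd1 hd2
    simp only [List.getElem_take, List.getElem_drop]
    have hdL : d < L := by simp at hd2; omega
    have h3 := heq d hdL
    rw [List.getElem?_eq_getElem (by omega), List.getElem?_eq_getElem (by omega)] at h3
    exact (Option.some.inj h3).symm
  have hseg : (w.drop k).take (L + L) = (w.drop k).take L ++ (w.drop k).take L := by
    rw [List.take_add, List.drop_drop, key]
  refine ⟨w.take k, w.drop (k + (L+L)), ?_⟩
  rw [← hseg, List.append_assoc, ← List.drop_drop, List.take_append_drop,
      List.take_append_drop]

lemma sqfree3 {a b c : Fin 3} (hab : a ≠ b) (hbc : b ≠ c) : SqFree [a,b,c] := by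
  rintro X hX ⟨s, t, hst⟩
  have hlen := congrArg List.length hst
  simp at hlen
  have hX0 : X.length ≠ 0 := by simpa using hX
  have hX1 : X.length = 1 := by omega
  obtain ⟨x, rfl⟩ := List.length_eq_one_iff.mp hX1
  rcases s with _ | ⟨y, s'⟩
  · simp at hst
    obtain ⟨h1, h2, -⟩ := hst
    exact hab (h1.symm.trans h2)
  · rcases s' with _ | ⟨z, s''⟩
    · simp at hst
      obtain ⟨-, h1, h2, -⟩ := hst
      exact hbc (h1.symm.trans h2)
    · simp at hlen; omega

theorem stmt14 (g : Fin 3 → List Bool) (q t : ℕ)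
    (hq : ∀ a, (g a).length = q)
    (hsync : ∀ a b c : Fin 3, ∀ u v : List Bool,
      g b ++ g c = u ++ g a ++ v → u.length = 0 ∨ u.length = q)
    (ht : 2 * t < q)
    (hshort : ∀ w : List (Fin 3), SqFree w →
      ∀ u : List Bool, t ≤ u.length → u.length ≤ 2 * q - 2 → ¬ (u ++ u) <:+: g2w g w)
    (htriple : ∀ w : List (Fin 3), SqFree w → w.length = 3 →
      ∀ u : List Bool, u.length = q → ¬ (u ++ u) <:+: g2w g w) :
    ∀ w : List (Fin 3), SqFree w →
      ∀ u : List Bool, t ≤ u.length → ¬ (u ++ u) <:+: g2w g w := by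
  have hq1 : 1 ≤ q := by omega
  have ginj : ∀ a b : Fin 3, g a = g b → a = b := by
    intro a b hg
    by_contra hab
    obtain ⟨c, hca, hcb⟩ : ∃ c, c ≠ a ∧ c ≠ b :=
      (show ∀ a b : Fin 3, a ≠ b → ∃ c, c ≠ a ∧ c ≠ b by decide) a b hab
    exact htriple [a,b,c] (sqfree3 hab (Ne.symm hcb)) rfl (g a) (hq a)
      ⟨[], g c, by simp [g2w, hg]⟩
  intro w hw u hu
  by_cases hlong : u.length ≤ 2*q - 2
  · exact hshort w hw u hu hlong
  intro hinf
  obtain ⟨s, tl, hx⟩ := hinf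
  set x := g2w g w with hxdef
  set n := u.length with hn
  set i := s.length with hi
  have hxlen : x.length = q * w.length := length_g2w g q hq w
  have hlen : i + (n + n) + tl.length = q * w.length := by
    have h := congrArg List.length hx
    simp only [List.length_append] at h
    omega
  have hnq : 2*q - 1 ≤ n := by omega
  have seg : ∀ d l, d + l ≤ n → (x.drop (i+d)).take l = (x.drop (i+d+n)).take l := by
    intro d l h
    rw [← hx]
    exact periodic_seg s u tl d l h
  have block : ∀ j (hj : j < w.length), (x.drop (j*q)).take q = g w[j] :=
    fun j hj => blockseg g q hq w j hj
  -- Step A: q divides n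
  have hdvd : n % q = 0 := by
    by_contra hs0
    have hmodn := Nat.div_add_mod n q
    have hs0' : 0 < n % q := Nat.pos_of_ne_zero hs0
    have hsq' : n % q < q := Nat.mod_lt _ (by omega)
    have hmodi := Nat.div_add_mod i q
    have hrlt : i % q < q := Nat.mod_lt _ (by omega)
    obtain ⟨j, hji, hjn⟩ : ∃ j, i ≤ j*q ∧ j*q + q ≤ i + n := by
      rcases Nat.eq_zero_or_pos (i % q) with hr | hr
      · refine ⟨i / q, ?_, ?_⟩ <;>
        · have e : (i/q) * q = q * (i/q) := by ring
          omega
      · refine ⟨i / q + 1, ?_, ?_⟩ <;>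
        · have e : (i/q + 1) * q = q * (i/q) + q := by ring
          omega
    have hjw : j + 1 ≤ w.length := by
      have h1 : (j+1)*q ≤ w.length * q := by
        have e1 : (j+1)*q = j*q + q := by ring
        have e2 : w.length * q = q * w.length := by ring
        omega
      exact Nat.le_of_mul_le_mul_right h1 (by omega)
    have copy : (x.drop (j*q + n)).take q = g (w[j]'(by omega)) := by
      have h3 := seg (j*q - i) q (by omega)
      rw [show i + (j*q - i) = j*q by omega] at h3
      exact h3.symm.trans (block j (by omega))
    have hmq : (j + n/q) * q + n % q = j*q + n := by
      have e : (j + n/q) * q = j*q + q * (n/q) := by ring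
      omega
    have hm2 : j + n/q + 2 ≤ w.length := by
      have h1 : (j + n/q + 2) * q < (w.length + 1) * q := by
        have e1 : (j + n/q + 2)*q = (j + n/q)*q + 2*q := by ring
        have e2 : (w.length+1)*q = q * w.length + q := by ring
        omega
      have h2 := Nat.lt_of_mul_lt_mul_right h1
      omega
    set m := j + n/q with hm
    set D := x.drop (m*q) with hD
    have hDlen : D.length = q * w.length - m*q := by
      rw [hD, List.length_drop, hxlen]
    have hD1 : D.take q = g (w[m]'(by omega)) := block m (by omega)
    have hD2 : (D.drop q).take q = g (w[m+1]'(by omega)) := by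
      rw [hD, List.drop_drop, show m*q + q = (m+1)*q by ring]
      exact block (m+1) (by omega)
    have hDj : (D.drop (n % q)).take q = g (w[j]'(by omega)) := by
      rw [hD, List.drop_drop, show m*q + n % q = j*q + n from hmq]
      exact copy
    have hsplit : D.take (q+q)
        = D.take (n%q) ++ ((D.drop (n%q)).take q ++ ((D.drop (n%q)).drop q).take (q - n%q)) := by
      rw [show q+q = n%q + (q + (q - n%q)) by omega, List.take_add, List.take_add]
    rw [hDj] at hsplit
    have hD12 : D.take (q+q) = g (w[m]'(by omega)) ++ g (w[m+1]'(by omega)) := by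
      rw [List.take_add, hD1, hD2]
    have hkey : g (w[m]'(by omega)) ++ g (w[m+1]'(by omega))
        = (D.take (n%q) ++ g (w[j]'(by omega))) ++ ((D.drop (n%q)).drop q).take (q - n%q) := by
      rw [List.append_assoc]
      exact hD12.symm.trans hsplit
    have hres := hsync _ _ _ _ _ hkey
    have hlenD : (D.take (n%q)).length = n%q := by
      rw [List.length_take, Nat.min_eq_left]
      rw [hDlen]
      have e1 : (m+2)*q = m*q + 2*q := by ring
      have e2 : w.length * q = q * w.length := by ring
      have e3 : (m+2)*q ≤ w.length * q := by
        have h4 : (m+2) ≤ w.length := by omega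
        exact Nat.mul_le_mul_right q h4
      omega
    omega
  -- Step B
  have hnL : n = (n/q) * q := by
    have h2 := Nat.div_add_mod n q
    have e : (n/q)*q = q*(n/q) := by ring
    omega
  set L := n / q with hLdef
  have hL1 : 1 ≤ L := by
    rcases Nat.eq_zero_or_pos L with h | h
    · rw [h] at hnL; simp at hnL; omega
    · exact h
  have hLetter : ∀ j', i ≤ j'*q → j'*q + q ≤ i + n → w[j']? = w[j'+L]? := by
    intro j' h1 h2
    have hj'w : j' + 1 ≤ w.length := by
      have h3 : (j'+1)*q ≤ w.length * q := by
        have e1 : (j'+1)*q = j'*q + q := by ring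
        have e2 : w.length*q = q*w.length := by ring
        omega
      exact Nat.le_of_mul_le_mul_right h3 (by omega)
    have hjLw : j' + L + 1 ≤ w.length := by
      have h3 : (j'+L+1)*q ≤ w.length * q := by
        have e1 : (j'+L+1)*q = j'*q + q + L*q := by ring
        have e2 : w.length*q = q*w.length := by ring
        omega
      exact Nat.le_of_mul_le_mul_right h3 (by omega)
    have e3 := seg (j'*q - i) q (by omega)
    rw [show i + (j'*q - i) = j'*q by omega,
        show j'*q + n = (j'+L)*q by
          have e4 : (j'+L)*q = j'*q + L*q := by ring
          omega] at e3
    have h5 : g (w[j']'(by omega)) = g (w[j'+L]'(by omega)) :=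
      (block j' (by omega)).symm.trans (e3.trans (block (j'+L) (by omega)))
    rw [List.getElem?_eq_getElem (show j' < w.length by omega),
        List.getElem?_eq_getElem (show j'+L < w.length by omega)]
    exact congrArg some (ginj _ _ h5)
  have hmodi := Nat.div_add_mod i q
  set K := i / q with hK
  set R := i % q with hR
  have hRlt : R < q := Nat.mod_lt _ (by omega)
  have hKq : K*q + R = i := by
    have e : K*q = q*K := by ring
    omega
  rcases Nat.eq_zero_or_pos R with hr | hr
  · -- aligned case
    have hbound : K + 2*L ≤ w.length := by
      have h3 : (K+2*L)*q ≤ w.length * q := by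
        have e1 : (K+2*L)*q = K*q + 2*(L*q) := by ring
        have e2 : w.length*q = q*w.length := by ring
        omega
      exact Nat.le_of_mul_le_mul_right h3 (by omega)
    refine not_sqfree_of_eq w K L (by omega) hbound ?_ hw
    intro d hd
    have h6 := hLetter (K+d)
      (by
        have e1 : (K+d)*q = K*q + d*q := by ring
        omega)
      (by
        have e1 : (K+d)*q = K*q + d*q := by ring
        have e5 : (d+1)*q ≤ L*q := Nat.mul_le_mul_right q (by omega)
        have e6 : (d+1)*q = d*q + q := by ring
        omega)
    rw [show K + L + d = K + d + L by omega]
    exact h6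
  · -- unaligned case
    have hbK2L : (K + 2*L)*q < w.length * q := by
      have e1 : (K+2*L)*q = K*q + 2*(L*q) := by ring
      have e2 : w.length*q = q*w.length := by ring
      omega
    have hbound : K + 2*L < w.length := Nat.lt_of_mul_lt_mul_right hbK2L
    have hwK : K < w.length := by omega
    have hwKL : K + L < w.length := by omega
    have hwK2L : K + 2*L < w.length := by omega
    have h_ab : (w[K]'hwK) ≠ (w[K+L]'hwKL) := by
      intro hab
      refine not_sqfree_of_eq w K L (by omega) (by omega) ?_ hw
      intro d hd
      rcases Nat.eq_zero_or_pos d with hd0 | hd0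
      · subst hd0
        rw [Nat.add_zero, Nat.add_zero, List.getElem?_eq_getElem (by omega),
            List.getElem?_eq_getElem (by omega)]
        exact congrArg some hab
      · have h6 := hLetter (K+d)
          (by
            have e1 : (K+d)*q = K*q + d*q := by ring
            have e5 : 1*q ≤ d*q := Nat.mul_le_mul_right q (by omega)
            omega)
          (by
            have e1 : (K+d)*q = K*q + d*q := by ring
            have e5 : (d+1)*q ≤ L*q := Nat.mul_le_mul_right q (by omega)
            have e6 : (d+1)*q = d*q + q := by ring
            omega)
        rw [show K + L + d = K + d + L by omega]
        exact h6
    have h_bc : (w[K+L]'hwKL) ≠ (w[K+2*L]'hwK2L) := by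
      intro hbc
      refine not_sqfree_of_eq w (K+1) L (by omega) (by omega) ?_ hw
      intro d hd
      rcases Nat.eq_or_lt_of_le (Nat.succ_le_of_lt hd) with hdL | hdL
      · rw [show K+1+d = K+L by omega, show K+1+L+d = K+2*L by omega,
            List.getElem?_eq_getElem (by omega), List.getElem?_eq_getElem (by omega)]
        exact congrArg some hbc
      · have h6 := hLetter (K+1+d)
          (by
            have e1 : (K+1+d)*q = K*q + (1+d)*q := by ring
            have e5 : 1*q ≤ (1+d)*q := Nat.mul_le_mul_right q (by omega)
            omega)
          (by
            have e1 : (K+1+d)*q = K*q + (1+d)*q := by ring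
            have e5 : (2+d)*q ≤ L*q := Nat.mul_le_mul_right q (by omega)
            have e6 : (2+d)*q = (1+d)*q + q := by ring
            omega)
        rw [show K+1+L+d = K+1+d+L by omega]
        exact h6
    have eKL : (K+L)*q + R = i + n := by
      have e1 : (K+L)*q = K*q + L*q := by ring
      omega
    have eK2L : (K+2*L)*q = i + (n - R) + n := by
      have e1 : (K+2*L)*q = K*q + L*q + L*q := by ring
      omega
    have E1 : (g (w[K]'hwK)).drop R = (g (w[K+L]'hwKL)).drop R := by
      have ea : (g (w[K]'hwK)).drop R = (x.drop i).take (q - R) := by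
        rw [← block K hwK, List.drop_take, List.drop_drop, show K*q + R = i from hKq]
      have eb : (g (w[K+L]'hwKL)).drop R = (x.drop (i+n)).take (q - R) := by
        rw [← block (K+L) hwKL, List.drop_take, List.drop_drop,
            show (K+L)*q + R = i + n from eKL]
      have es := seg 0 (q - R) (by omega)
      rw [Nat.add_zero] at es
      rw [ea, eb]; exact es
    have E2 : (g (w[K+L]'hwKL)).take R = (g (w[K+2*L]'hwK2L)).take R := by
      have ea : (g (w[K+L]'hwKL)).take R = (x.drop (i + (n - R))).take R := by
        rw [← block (K+L) hwKL, List.take_take, Nat.min_eq_left (by omega),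
            show (K+L)*q = i + (n - R) by omega]
      have eb : (g (w[K+2*L]'hwK2L)).take R = (x.drop (i + (n-R) + n)).take R := by
        rw [← block (K+2*L) hwK2L, List.take_take, Nat.min_eq_left (by omega), eK2L]
      rw [ea, eb]
      exact seg (n - R) R (by omega)
    have hlen₀ : ((g (w[K]'hwK)).drop R ++ (g (w[K+L]'hwKL)).take R).length = q := by
      simp [hq, Nat.min_eq_left hRlt.le]
      omega
    refine htriple [w[K]'hwK, w[K+L]'hwKL, w[K+2*L]'hwK2L] (sqfree3 h_ab h_bc) rfl
      _ hlen₀ ⟨(g (w[K]'hwK)).take R, (g (w[K+2*L]'hwK2L)).drop R, ?_⟩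
    have expand : g2w g [w[K]'hwK, w[K+L]'hwKL, w[K+2*L]'hwK2L]
        = g (w[K]'hwK) ++ (g (w[K+L]'hwKL) ++ g (w[K+2*L]'hwK2L)) := by
      simp [g2w]
    rw [expand]
    conv_rhs => rw [← List.take_append_drop R (g (w[K]'hwK)),
      ← List.take_append_drop R (g (w[K+L]'hwKL)),
      ← List.take_append_drop R (g (w[K+2*L]'hwK2L))]
    rw [← E1, ← E2]
    simp only [List.append_assoc]
end

section
/- Every recurrent bi-infinite binary word that avoids the formulas AABA.BABA and ABAA.ABAB and contains no square of period at least 3 has the property that its only square factors are among {00, 11, 0101} or among {00, 11, 1010}. -/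
def RecurrentZ {α : Type*} (w : ℤ → α) : Prop :=
  ∀ u : List α, FacZ w u → ∀ N : ℤ, ∃ i : ℤ, N ≤ i ∧
    u = (List.range u.length).map (fun k => w (i + k))

lemma fac4 (w : ℤ → Bool) (a b c d : Bool) :
    FacZ w [a,b,c,d] ↔ ∃ i : ℤ, w i = a ∧ w (i+1) = b ∧ w (i+2) = c ∧ w (i+3) = d := by
  unfold FacZ
  simp [List.range_succ, eq_comm]

lemma fac8 (w : ℤ → Bool) (a b c d e f g h : Bool) :
    FacZ w [a,b,c,d,e,f,g,h] ↔ ∃ i : ℤ, w i = a ∧ w (i+1) = b ∧ w (i+2) = c ∧ w (i+3) = d ∧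
      w (i+4) = e ∧ w (i+5) = f ∧ w (i+6) = g ∧ w (i+7) = h := by
  unfold FacZ
  simp [List.range_succ, eq_comm]

lemma key00 (w : ℤ → Bool)
    (h1 : ¬ ∃ A B : List Bool, A ≠ [] ∧ B ≠ [] ∧
      FacZ w (A ++ A ++ B ++ A) ∧ FacZ w (B ++ A ++ B ++ A))
    (a : Bool) (h : FacZ w [a,a,a,a]) : False :=
  h1 ⟨[a], [a], by simp, by simp, h, h⟩

lemma key3 (w : ℤ → Bool)
    (h2 : ¬ ∃ A B : List Bool, A ≠ [] ∧ B ≠ [] ∧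
      FacZ w (A ++ B ++ A ++ A) ∧ FacZ w (A ++ B ++ A ++ B))
    (h3 : ∀ u : List Bool, 3 ≤ u.length → ¬ FacZ w (u ++ u))
    (h01 : FacZ w [false,true,false,true])
    (h10 : FacZ w [true,false,true,false]) : False := by
  have stepA : ∀ j : ℤ, w j = true → w (j+1) = false → w (j+2) = true → w (j+3) = false := by
    intro j e0 e1 e2
    by_contra hc
    have e3 : w (j+3) = true := by cases h : w (j+3) <;> simp_all
    exact h2 ⟨[true], [false], by simp, by simp,
      (fac4 w _ _ _ _).mpr ⟨j, e0, e1, e2, e3⟩, h10⟩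
  have stepB : ∀ j : ℤ, w j = false → w (j+1) = true → w (j+2) = false → w (j+3) = true := by
    intro j e0 e1 e2
    by_contra hc
    have e3 : w (j+3) = false := by cases h : w (j+3) <;> simp_all
    exact h2 ⟨[false], [true], by simp, by simp,
      (fac4 w _ _ _ _).mpr ⟨j, e0, e1, e2, e3⟩, h01⟩
  obtain ⟨i, e0, e1, e2, e3⟩ := (fac4 w _ _ _ _).mp h01
  have e4 : w (i+4) = false := by
    have := stepA (i+1) e1 (by rw [show i+1+1 = i+2 by ring]; exact e2)
      (by rw [show i+1+2 = i+3 by ring]; exact e3)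
    rwa [show i+1+3 = i+4 by ring] at this
  have e5 : w (i+5) = true := by
    have := stepB (i+2) e2 (by rw [show i+2+1 = i+3 by ring]; exact e3)
      (by rw [show i+2+2 = i+4 by ring]; exact e4)
    rwa [show i+2+3 = i+5 by ring] at this
  have e6 : w (i+6) = false := by
    have := stepA (i+3) e3 (by rw [show i+3+1 = i+4 by ring]; exact e4)
      (by rw [show i+3+2 = i+5 by ring]; exact e5)
    rwa [show i+3+3 = i+6 by ring] at this
  have e7 : w (i+7) = true := by
    have := stepB (i+4) e4 (by rw [show i+4+1 = i+5 by ring]; exact e5)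
      (by rw [show i+4+2 = i+6 by ring]; exact e6)
    rwa [show i+4+3 = i+7 by ring] at this
  have hfac : FacZ w ([false,true,false,true] ++ [false,true,false,true]) :=
    (fac8 w _ _ _ _ _ _ _ _).mpr ⟨i, e0, e1, e2, e3, e4, e5, e6, e7⟩
  exact h3 [false,true,false,true] (by norm_num) hfac

theorem stmt18 (w : ℤ → Bool) (hrec : RecurrentZ w)
    (h1 : ¬ ∃ A B : List Bool, A ≠ [] ∧ B ≠ [] ∧
      FacZ w (A ++ A ++ B ++ A) ∧ FacZ w (B ++ A ++ B ++ A))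
    (h2 : ¬ ∃ A B : List Bool, A ≠ [] ∧ B ≠ [] ∧
      FacZ w (A ++ B ++ A ++ A) ∧ FacZ w (A ++ B ++ A ++ B))
    (h3 : ∀ u : List Bool, 3 ≤ u.length → ¬ FacZ w (u ++ u)) :
    (∀ u : List Bool, u ≠ [] → FacZ w (u ++ u) →
      u ∈ [[false], [true], [false, true]]) ∨
    (∀ u : List Bool, u ≠ [] → FacZ w (u ++ u) →
      u ∈ [[false], [true], [true, false]]) := by
  by_cases hx : FacZ w [false,true,false,true]
  · left
    intro u hne hsq
    match u with
    | [] => exact absurd rfl hne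
    | [a] => cases a <;> simp
    | [a, b] =>
      cases a <;> cases b
      · exact absurd hsq (fun h => key00 w h1 false h)
      · simp
      · exact absurd hsq (fun h => key3 w h2 h3 hx h)
      · exact absurd hsq (fun h => key00 w h1 true h)
    | a :: b :: c :: l =>
      exact absurd hsq (h3 _ (by simp))
  · right
    intro u hne hsq
    match u with
    | [] => exact absurd rfl hne
    | [a] => cases a <;> simp
    | [a, b] =>
      cases a <;> cases b
      · exact absurd hsq (fun h => key00 w h1 false h)
      · exact absurd hsq hx
      · simp
      · exact absurd hsq (fun h => key00 w h1 true h)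
    | a :: b :: c :: l =>
      exact absurd hsq (h3 _ (by simp))
end
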